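/- Let s > 2d, 0 ≤ r < s - 2d, χ: R^{2d} → R^{2d} a bi-Lipschitz bijection, and μ a v_r-moderate weight on R^{2d}. If K is a kernel with |K(w,z)| ≤ C ⟨z - χ(w)⟩^{-s}, then the operator T F(z) = ∫ K(w,z) F(w) dw is bounded from the weighted space L^p_{μ∘χ}(R^{2d}) to L^p_μ(R^{2d}) for every 1 ≤ p ≤ ∞. -/

import Mathlib

open MeasureTheory ENNReal NNReal

open Filter Module

section Core
variable {α : Type*} [MeasurableSpace α] {μ0 : Measure α}

/-- Every `ℝ≥0∞`-valued function on an s-finite measure space admits a measurable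
"core": a measurable minorant dominating a.e. every measurable minorant. -/
lemma exists_measurable_core [SFinite μ0] (g : α → ℝ≥0∞) :
    ∃ g₀ : α → ℝ≥0∞, Measurable g₀ ∧ g₀ ≤ g ∧
      ∀ ψ : α → ℝ≥0∞, Measurable ψ → ψ ≤ g → ψ ≤ᵐ[μ0] g₀ := by
  obtain ⟨ν, hνfin, hac, -⟩ := MeasureTheory.exists_isFiniteMeasure_absolutelyContinuous μ0
  set T : ℝ≥0∞ → ℝ≥0∞ := fun x => 1 - (1 + x)⁻¹ with hTdef
  have hTmono : Monotone T := fun x y hxy => by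
    apply tsub_le_tsub_left
    exact ENNReal.inv_le_inv.mpr (add_le_add_right hxy 1)
  have hTle : ∀ x y : ℝ≥0∞, T x ≤ T y → x ≤ y := by
    intro x y h
    have h' : (1:ℝ≥0∞) - (1 + x)⁻¹ ≤ 1 - (1 + y)⁻¹ := h
    have hy1 : (1 + y)⁻¹ ≤ 1 := by
      simpa using ENNReal.inv_le_inv.mpr (le_add_right le_rfl : (1:ℝ≥0∞) ≤ 1 + y)
    have h1 : (1 + y)⁻¹ ≤ (1 + x)⁻¹ :=
      (ENNReal.sub_le_sub_iff_left hy1 one_ne_top).mp h'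
    have h2 : (1 : ℝ≥0∞) + x ≤ 1 + y := ENNReal.inv_le_inv.mp h1
    exact (ENNReal.add_le_add_iff_left one_ne_top).mp h2
  have hTmeas : Measurable T := by
    have : Measurable fun x : ℝ≥0∞ => (1 + x)⁻¹ :=
      measurable_inv.comp (measurable_const_add 1)
    exact this.const_sub 1
  have hT1 : ∀ x, T x ≤ 1 := fun x => tsub_le_self
  set S : Set (α → ℝ≥0∞) := {ψ | Measurable ψ ∧ ψ ≤ g} with hSdef
  have h0S : (fun _ => (0:ℝ≥0∞)) ∈ S := ⟨measurable_const, fun _ => zero_le⟩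
  set J : (α → ℝ≥0∞) → ℝ≥0∞ := fun ψ => ∫⁻ x, T (ψ x) ∂ν with hJdef
  have hJfin : ∀ ψ, J ψ ≤ ν Set.univ := by
    intro ψ
    calc ∫⁻ x, T (ψ x) ∂ν ≤ ∫⁻ _, 1 ∂ν := lintegral_mono fun x => hT1 _
    _ = ν Set.univ := by simp
  set V : Set ℝ≥0∞ := J '' S with hVdef
  have hVne : V.Nonempty := ⟨J fun _ => 0, ⟨_, h0S, rfl⟩⟩
  obtain ⟨u, -, hulim, huV⟩ := exists_seq_tendsto_sSup hVne (OrderTop.bddAbove V)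
  choose ψs hψsS hψsJ using fun n => huV n
  set g₀ : α → ℝ≥0∞ := fun x => ⨆ n, ψs n x with hg₀def
  have hg₀m : Measurable g₀ := Measurable.iSup fun n => (hψsS n).1
  have hg₀le : g₀ ≤ g := fun x => iSup_le fun n => (hψsS n).2 x
  have hg₀S : g₀ ∈ S := ⟨hg₀m, hg₀le⟩
  have hJle : ∀ ψ ∈ S, J ψ ≤ sSup V := fun ψ hψ => le_sSup ⟨ψ, hψ, rfl⟩
  have hJg₀ : J g₀ = sSup V := by
    refine le_antisymm (hJle _ hg₀S) ?_
    refine le_of_tendsto' hulim fun n => ?_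
    rw [← hψsJ n]
    exact lintegral_mono fun x => hTmono (le_iSup (fun m => ψs m x) n)
  refine ⟨g₀, hg₀m, hg₀le, ?_⟩
  intro ψ hψm hψle
  set φ : α → ℝ≥0∞ := fun x => ψ x ⊔ g₀ x with hφdef
  have hφS : φ ∈ S := ⟨hψm.sup hg₀m, fun x => sup_le (hψle x) (hg₀le x)⟩
  have hle : (fun x => T (g₀ x)) ≤ᵐ[ν] fun x => T (φ x) :=
    Filter.Eventually.of_forall fun x => hTmono le_sup_right
  have hfin : ∫⁻ x, T (g₀ x) ∂ν ≠ ∞ :=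
    ((hJfin g₀).trans_lt (measure_lt_top ν _)).ne
  have hsub : ∫⁻ x, T (φ x) - T (g₀ x) ∂ν = 0 := by
    have hg₀Tm : Measurable fun x => T (g₀ x) := by exact hTmeas.comp hg₀m
    rw [lintegral_sub hg₀Tm hfin hle]
    have h1 : J φ ≤ J g₀ := (hJle _ hφS).trans_eq hJg₀.symm
    exact tsub_eq_zero_of_le h1
  have hae : ∀ᵐ x ∂ν, T (φ x) - T (g₀ x) = 0 := by
    have hm : Measurable fun x => T (φ x) - T (g₀ x) := by
      have h1 : Measurable fun x => T (φ x) := by exact hTmeas.comp (hψm.sup hg₀m)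
      have h2 : Measurable fun x => T (g₀ x) := by exact hTmeas.comp hg₀m
      exact h1.sub h2
    have := (lintegral_eq_zero_iff hm).mp hsub
    filter_upwards [this] with x hx using hx
  have haeν : ∀ᵐ x ∂ν, ψ x ≤ g₀ x := by
    filter_upwards [hae] with x hx
    have : T (φ x) ≤ T (g₀ x) := tsub_eq_zero_iff_le.mp hx
    have := hTle _ _ this
    exact le_trans (le_sup_left : ψ x ≤ φ x) this
  exact hac.ae_le haeν

/-- Division trick: a lower Lebesgue integral against an arbitrary function is dominated
by the one against its measurable core. -/
lemma lintegral_mul_le_core {f g g₀ : α → ℝ≥0∞} (hf : Measurable f) (hf' : ∀ x, f x ≠ ∞)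
    (hcore : ∀ ψ : α → ℝ≥0∞, Measurable ψ → ψ ≤ g → ψ ≤ᵐ[μ0] g₀) :
    ∫⁻ x, f x * g x ∂μ0 ≤ ∫⁻ x, f x * g₀ x ∂μ0 := by
  conv_lhs => rw [MeasureTheory.lintegral]
  refine iSup₂_le fun φ hφ => ?_
  set ψ : α → ℝ≥0∞ := fun x => if f x = 0 then 0 else φ x / f x with hψdef
  have hψm : Measurable ψ :=
    Measurable.ite (hf (measurableSet_singleton 0)) measurable_const
      (φ.measurable.div hf)
  have hψle : ψ ≤ g := by
    intro x
    by_cases h : f x = 0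
    · simp [hψdef, h]
    · simp only [hψdef, h, if_false]
      rw [ENNReal.div_le_iff_le_mul (Or.inl h) (Or.inl (hf' x))]
      rw [mul_comm]
      exact hφ x
  have hφle : ∀ x, φ x ≤ f x * ψ x := by
    intro x
    by_cases h : f x = 0
    · have := hφ x
      simpa [h] using this
    · simp only [hψdef, h, if_false]
      rw [ENNReal.mul_div_cancel h (hf' x)]
  calc φ.lintegral μ0 = ∫⁻ x, φ x ∂μ0 := (φ.lintegral_eq_lintegral μ0).symm
    _ ≤ ∫⁻ x, f x * ψ x ∂μ0 := lintegral_mono hφle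
    _ ≤ ∫⁻ x, f x * g₀ x ∂μ0 := by
        refine lintegral_mono_ae ?_
        filter_upwards [hcore ψ hψm hψle] with x hx
        exact mul_le_mul_right hx _

end Core


section Np
variable {α : Type*} [MeasurableSpace α]

noncomputable def Np (μ0 : Measure α) (p : ℝ≥0∞) (Φ : α → ℝ≥0∞) : ℝ≥0∞ :=
  if p = ∞ then essSup Φ μ0 else (∫⁻ x, Φ x ^ p.toReal ∂μ0) ^ (1 / p.toReal)

lemma eLpNorm_eq_Np {μ0 : Measure α} {p : ℝ≥0∞} (hp : 1 ≤ p) (f : α → ℂ) :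
    eLpNorm f p μ0 = Np μ0 p fun x => (‖f x‖₊ : ℝ≥0∞) := by
  have hp0 : p ≠ 0 := (zero_lt_one.trans_le hp).ne'
  rcases eq_or_ne p ∞ with h | h
  · rw [h]; simp [Np, eLpNorm_exponent_top, eLpNormEssSup, enorm_eq_nnnorm]
  · rw [eLpNorm_eq_lintegral_rpow_enorm_toReal hp0 h, Np, if_neg h]; rfl

lemma Np_mono {μ0 : Measure α} {p : ℝ≥0∞} {Φ1 Φ2 : α → ℝ≥0∞} (h : ∀ x, Φ1 x ≤ Φ2 x) :
    Np μ0 p Φ1 ≤ Np μ0 p Φ2 := by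
  rcases eq_or_ne p ∞ with hp | hp
  · rw [Np, Np, if_pos hp, if_pos hp]
    exact essSup_mono_ae (Filter.Eventually.of_forall h)
  · rw [Np, Np, if_neg hp, if_neg hp]
    refine ENNReal.rpow_le_rpow ?_ (by positivity)
    exact lintegral_mono fun x => ENNReal.rpow_le_rpow (h x) ENNReal.toReal_nonneg

/-- Schur's test for all `1 ≤ p ≤ ∞`, for a measurable nonnegative function `H`. -/
lemma schur_bound {E : Type*} [MeasurableSpace E] {vol : Measure E} [SFinite vol]
    {k : E → E → ℝ≥0∞} (hk : Measurable (Function.uncurry k)) (hkfin : ∀ w z, k w z ≠ ∞)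
    {A : ℝ≥0∞} (hA0 : A ≠ 0) (hAtop : A ≠ ∞)
    (hA1 : ∀ z, ∫⁻ w, k w z ∂vol ≤ A) (hA2 : ∀ w, ∫⁻ z, k w z ∂vol ≤ A)
    {H : E → ℝ≥0∞} (hH : Measurable H)
    {p : ℝ≥0∞} (hp : 1 ≤ p) :
    Np vol p (fun z => ∫⁻ w, k w z * H w ∂vol) ≤ A * Np vol p H := by
  have hksec : ∀ z, Measurable fun w => k w z := fun z => by
    have : (fun w => k w z) = Function.uncurry k ∘ fun w => (w, z) := rfl
    rw [this]; exact hk.comp (measurable_id.prodMk measurable_const)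
  have hksec2 : ∀ w, Measurable fun z => k w z := fun w => by
    have : (fun z => k w z) = Function.uncurry k ∘ fun z => (w, z) := rfl
    rw [this]; exact hk.comp (measurable_const.prodMk measurable_id)
  have swap_le : ∀ G : E → ℝ≥0∞, Measurable G →
      ∫⁻ z, ∫⁻ w, k w z * G w ∂vol ∂vol ≤ A * ∫⁻ w, G w ∂vol := by
    intro G hG
    have hmeas : AEMeasurable (Function.uncurry fun z w => k w z * G w) (vol.prod vol) := by
      apply Measurable.aemeasurable
      have h1 : Measurable fun q : E × E => k q.2 q.1 := hk.comp measurable_swap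
      exact h1.mul (hG.comp measurable_snd)
    rw [lintegral_lintegral_swap hmeas]
    calc ∫⁻ w, ∫⁻ z, k w z * G w ∂vol ∂vol
        = ∫⁻ w, (∫⁻ z, k w z ∂vol) * G w ∂vol :=
          lintegral_congr fun w => lintegral_mul_const'' (G w) (hksec2 w).aemeasurable
      _ ≤ ∫⁻ w, A * G w ∂vol := lintegral_mono fun w => mul_le_mul_left (hA2 w) _
      _ = A * ∫⁻ w, G w ∂vol := lintegral_const_mul' A G hAtop
  rcases eq_or_ne p ∞ with hptop | hptop
  · subst hptop
    rw [Np, if_pos rfl, Np, if_pos rfl]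
    refine essSup_le_of_ae_le _ (Filter.Eventually.of_forall fun z => ?_)
    calc ∫⁻ w, k w z * H w ∂vol ≤ ∫⁻ w, k w z * essSup H vol ∂vol := by
          refine lintegral_mono_ae ?_
          filter_upwards [ae_le_essSup H] with w hw
          exact mul_le_mul_right hw _
      _ = (∫⁻ w, k w z ∂vol) * essSup H vol :=
          lintegral_mul_const'' _ (hksec z).aemeasurable
      _ ≤ A * essSup H vol := mul_le_mul_left (hA1 z) _
  have hpr1 : 1 ≤ p.toReal := by
    rw [← ENNReal.toReal_one]
    exact ENNReal.toReal_mono hptop hp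
  set pr := p.toReal with hprdef
  rw [Np, if_neg hptop, Np, if_neg hptop]
  rcases eq_or_lt_of_le hpr1 with hpr_eq | hpr_lt
  · rw [← hprdef, ← hpr_eq]
    simp only [ENNReal.rpow_one, one_div_one]
    exact swap_le H hH
  · set q : ℝ := Real.conjExponent pr with hqdef
    have hpq : pr.HolderConjugate q := Real.HolderConjugate.conjExponent hpr_lt
    have hq0 : 0 < q := hpq.symm.pos
    have hpr0 : (0:ℝ) < pr := lt_of_lt_of_le zero_lt_one hpr1
    have hinv : 1/q + 1/pr = 1 := by
      rw [one_div, one_div]; exact hpq.symm.inv_add_inv_eq_one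
    have hold : ∀ z, (∫⁻ w, k w z * H w ∂vol) ≤
        A ^ (1/q) * (∫⁻ w, k w z * H w ^ pr ∂vol) ^ (1/pr) := by
      intro z
      have hsplit : ∀ w, k w z * H w = ((k w z) ^ (1/q)) * ((k w z) ^ (1/pr) * H w) := by
        intro w
        rcases eq_or_ne (k w z) 0 with h | h
        · rw [h, ENNReal.zero_rpow_of_pos (by positivity : (0:ℝ) < 1/q),
            ENNReal.zero_rpow_of_pos (by positivity : (0:ℝ) < 1/pr)]
          simp
        · rw [← mul_assoc, ← ENNReal.rpow_add _ _ h (hkfin w z), hinv, ENNReal.rpow_one]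
      calc ∫⁻ w, k w z * H w ∂vol
          = ∫⁻ w, ((k w z) ^ (1/q)) * ((k w z) ^ (1/pr) * H w) ∂vol :=
            lintegral_congr fun w => hsplit w
        _ ≤ (∫⁻ w, ((k w z) ^ (1/q)) ^ q ∂vol) ^ (1/q) *
            (∫⁻ w, ((k w z) ^ (1/pr) * H w) ^ pr ∂vol) ^ (1/pr) := by
            have := ENNReal.lintegral_mul_le_Lp_mul_Lq vol hpq.symm
              ((hksec z).pow_const (1/q)).aemeasurable
              (((hksec z).pow_const (1/pr)).mul hH).aemeasurable
            simpa [Pi.mul_apply] using this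
        _ = (∫⁻ w, k w z ∂vol) ^ (1/q) * (∫⁻ w, k w z * H w ^ pr ∂vol) ^ (1/pr) := by
            congr 2
            · refine lintegral_congr fun w => ?_
              rw [← ENNReal.rpow_mul, one_div_mul_cancel hq0.ne', ENNReal.rpow_one]
            · refine lintegral_congr fun w => ?_
              rw [ENNReal.mul_rpow_of_nonneg _ _ hpr0.le, ← ENNReal.rpow_mul,
                one_div_mul_cancel hpr0.ne', ENNReal.rpow_one]
        _ ≤ A ^ (1/q) * (∫⁻ w, k w z * H w ^ pr ∂vol) ^ (1/pr) :=
            mul_le_mul_left (ENNReal.rpow_le_rpow (hA1 z) (by positivity)) _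
    have hApow_ne_top : A ^ (1/q) ≠ ∞ := ENNReal.rpow_ne_top_of_nonneg (by positivity) hAtop
    have hmain : ∫⁻ z, (∫⁻ w, k w z * H w ∂vol) ^ pr ∂vol ≤
        (A ^ (1/q)) ^ pr * (A * ∫⁻ w, H w ^ pr ∂vol) := by
      calc ∫⁻ z, (∫⁻ w, k w z * H w ∂vol) ^ pr ∂vol
          ≤ ∫⁻ z, (A ^ (1/q)) ^ pr * (∫⁻ w, k w z * H w ^ pr ∂vol) ∂vol := by
            refine lintegral_mono fun z => ?_
            have h1 := ENNReal.rpow_le_rpow (hold z) hpr0.le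
            have h2 : ((∫⁻ w, k w z * H w ^ pr ∂vol) ^ (1/pr)) ^ pr
                = ∫⁻ w, k w z * H w ^ pr ∂vol := by
              rw [← ENNReal.rpow_mul, one_div_mul_cancel hpr0.ne', ENNReal.rpow_one]
            rwa [ENNReal.mul_rpow_of_nonneg _ _ hpr0.le, h2] at h1
        _ = (A ^ (1/q)) ^ pr * ∫⁻ z, ∫⁻ w, k w z * H w ^ pr ∂vol ∂vol :=
            lintegral_const_mul' _ _ (ENNReal.rpow_ne_top_of_nonneg hpr0.le hApow_ne_top)
        _ ≤ (A ^ (1/q)) ^ pr * (A * ∫⁻ w, H w ^ pr ∂vol) :=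
            mul_le_mul_right (swap_le (fun w => H w ^ pr) (hH.pow_const pr)) _
    calc (∫⁻ z, (∫⁻ w, k w z * H w ∂vol) ^ pr ∂vol) ^ (1/pr)
        ≤ ((A ^ (1/q)) ^ pr * (A * ∫⁻ w, H w ^ pr ∂vol)) ^ (1/pr) :=
          ENNReal.rpow_le_rpow hmain (by positivity)
      _ = A * (∫⁻ w, H w ^ pr ∂vol) ^ (1/pr) := by
          rw [ENNReal.mul_rpow_of_nonneg _ _ (by positivity : (0:ℝ) ≤ 1/pr),
            ENNReal.mul_rpow_of_nonneg _ _ (by positivity : (0:ℝ) ≤ 1/pr),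
            ← ENNReal.rpow_mul, mul_one_div, div_self hpr0.ne', ENNReal.rpow_one,
            ← mul_assoc, ← ENNReal.rpow_add _ _ hA0 hAtop, hinv, ENNReal.rpow_one]

end Np


set_option maxHeartbeats 1000000

/-- Weighted mapping theorem: a kernel dominated by `C ⟨z - χ(w)⟩^{-s}`, with `χ`
bi-Lipschitz, `s > 2d`, `0 ≤ r < s - 2d` and `μ` a `v_r`-moderate weight, defines an
operator bounded from `L^p_{μ∘χ}(ℝ^{2d})` to `L^p_μ(ℝ^{2d})` for every `1 ≤ p ≤ ∞`. -/
theorem weighted_kernel_Lp_bounded (d : ℕ) (s r : ℝ) (hs : s > 2 * d)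
    (hr0 : 0 ≤ r) (hr : r < s - 2 * d)
    (χ : EuclideanSpace ℝ (Fin (2 * d)) → EuclideanSpace ℝ (Fin (2 * d)))
    (hbij : Function.Bijective χ) (L : ℝ) (hL : 0 < L)
    (hlip : ∀ a b, ‖χ a - χ b‖ ≤ L * ‖a - b‖)
    (hlip' : ∀ a b, ‖a - b‖ ≤ L * ‖χ a - χ b‖)
    (μ : EuclideanSpace ℝ (Fin (2 * d)) → ℝ) (hμ_pos : ∀ z, 0 < μ z)
    (Cμ : ℝ) (hCμ : 0 < Cμ)
    (hmod : ∀ z ζ, μ (z + ζ) ≤ Cμ * (1 + ‖z‖ ^ 2) ^ (r / 2) * μ ζ)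
    (K : EuclideanSpace ℝ (Fin (2 * d)) → EuclideanSpace ℝ (Fin (2 * d)) → ℂ)
    (C : ℝ) (hC : 0 ≤ C) (hK_meas : Measurable (Function.uncurry K))
    (hK : ∀ w z, ‖K w z‖ ≤ C * (1 + ‖z - χ w‖ ^ 2) ^ (-s / 2)) :
    ∃ C' : ℝ, C' > 0 ∧ ∀ p : ℝ≥0∞, 1 ≤ p →
      ∀ F : EuclideanSpace ℝ (Fin (2 * d)) → ℂ, AEStronglyMeasurable F volume →
        eLpNorm (fun z => (μ z : ℂ) * ∫ w, K w z * F w) p volume ≤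
          ENNReal.ofReal C' * eLpNorm (fun w => (μ (χ w) : ℂ) * F w) p volume := by
  classical
  have hrs : r - s < 0 := by linarith
  have hsr : (0:ℝ) < s - r := by linarith
  -- continuity of χ
  have hχcont : Continuous χ := by
    refine (LipschitzWith.of_dist_le_mul (K := ⟨L, hL.le⟩) fun a b => ?_).continuous
    exact (by simpa [dist_eq_norm] using hlip a b : dist (χ a) (χ b) ≤ L * dist a b)
  set ψ : EuclideanSpace ℝ (Fin (2 * d)) → EuclideanSpace ℝ (Fin (2 * d)) :=
    Function.invFun χ with hψdef
  have hψ : ∀ z, χ (ψ z) = z := fun z => Function.rightInverse_invFun hbij.2 z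
  -- the radial majorant g
  set g : EuclideanSpace ℝ (Fin (2 * d)) → ℝ :=
    fun u => (1 + ‖u‖ ^ 2) ^ ((r - s) / 2) with hgdef
  have hbase : ∀ u : EuclideanSpace ℝ (Fin (2 * d)), (0:ℝ) < 1 + ‖u‖ ^ 2 := fun u => by
    positivity
  have hgpos : ∀ u, 0 < g u := fun u => Real.rpow_pos_of_pos (hbase u) _
  have hgcont : Continuous g := by
    have h1 : Continuous fun u : EuclideanSpace ℝ (Fin (2 * d)) => 1 + ‖u‖ ^ 2 :=
      continuous_const.add (continuous_norm.pow 2)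
    exact h1.rpow_const fun u => Or.inl (hbase u).ne'
  set c0 : ℝ := Cμ * (C + 1) with hc0def
  have hc0 : 0 < c0 := by positivity
  -- the dominating kernel
  set k : EuclideanSpace ℝ (Fin (2 * d)) → EuclideanSpace ℝ (Fin (2 * d)) → ℝ≥0∞ :=
    fun w z => ENNReal.ofReal (c0 * g (z - χ w)) with hkdef
  have hkmeas : Measurable (Function.uncurry k) := by
    apply Continuous.measurable
    exact ENNReal.continuous_ofReal.comp
      (continuous_const.mul (hgcont.comp (continuous_snd.sub (hχcont.comp continuous_fst))))
  have hkfin : ∀ w z, k w z ≠ ∞ := fun w z => ENNReal.ofReal_ne_top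
  have hksec : ∀ z, Measurable fun w => k w z := fun z => by
    have : (fun w => k w z) = Function.uncurry k ∘ fun w => (w, z) := rfl
    rw [this]; exact hkmeas.comp (measurable_id.prodMk measurable_const)
  -- integral of the majorant
  set Ig : ℝ≥0∞ := ∫⁻ u, ENNReal.ofReal (g u) with hIgdef
  have hfr : (finrank ℝ (EuclideanSpace ℝ (Fin (2 * d))) : ℝ) < s - r := by
    rw [finrank_euclideanSpace_fin]; push_cast; linarith
  have hIgtop : Ig < ∞ := by
    have hgle : ∀ u : EuclideanSpace ℝ (Fin (2 * d)),
        g u ≤ (2:ℝ) ^ ((s - r) / 2) * (1 + ‖u‖) ^ (-(s - r)) := by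
      intro u
      have ht : (0:ℝ) ≤ ‖u‖ := norm_nonneg u
      have h2 : (1 + ‖u‖) ^ 2 / 2 ≤ 1 + ‖u‖ ^ 2 := by nlinarith [sq_nonneg (‖u‖ - 1)]
      have hposq : (0:ℝ) < (1 + ‖u‖) ^ 2 / 2 := by positivity
      have h3 : g u ≤ ((1 + ‖u‖) ^ 2 / 2) ^ ((r - s) / 2) :=
        Real.rpow_le_rpow_of_nonpos hposq h2 (by linarith)
      refine h3.trans_eq ?_
      rw [Real.div_rpow (by positivity) (by norm_num : (0:ℝ) ≤ 2)]
      rw [← Real.rpow_natCast (1 + ‖u‖) 2, ← Real.rpow_mul (by positivity)]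
      rw [show ((2:ℕ):ℝ) * ((r - s) / 2) = -(s - r) by push_cast; ring]
      rw [div_eq_mul_inv, ← Real.rpow_neg (by norm_num : (0:ℝ) ≤ 2)]
      rw [show -((r - s) / 2) = (s - r) / 2 by ring]
      ring
    calc Ig ≤ ∫⁻ u, ENNReal.ofReal ((2:ℝ) ^ ((s - r) / 2) * (1 + ‖u‖) ^ (-(s - r))) :=
          lintegral_mono fun u => ENNReal.ofReal_le_ofReal (hgle u)
      _ = ENNReal.ofReal ((2:ℝ) ^ ((s - r) / 2)) *
          ∫⁻ u, ENNReal.ofReal ((1 + ‖u‖) ^ (-(s - r))) := by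
          simp_rw [ENNReal.ofReal_mul (by positivity : (0:ℝ) ≤ (2:ℝ) ^ ((s - r) / 2))]
          exact lintegral_const_mul' _ _ ENNReal.ofReal_ne_top
      _ < ∞ := ENNReal.mul_lt_top ENNReal.ofReal_lt_top (finite_integral_one_add_norm hfr)
  have hIg0 : Ig ≠ 0 := by
    have hm : Measurable fun u : EuclideanSpace ℝ (Fin (2 * d)) => ENNReal.ofReal (g u) :=
      ENNReal.measurable_ofReal.comp hgcont.measurable
    have hsupp : Function.support (fun u : EuclideanSpace ℝ (Fin (2 * d)) =>
        ENNReal.ofReal (g u)) = Set.univ := by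
      ext u
      simp only [Function.mem_support, Set.mem_univ, iff_true]
      exact (ENNReal.ofReal_pos.mpr (hgpos u)).ne'
    have hpos : 0 < Ig := by
      rw [hIgdef, lintegral_pos_iff_support hm, hsupp]
      exact (isOpen_univ.measure_pos volume ⟨0, Set.mem_univ 0⟩)
    exact hpos.ne'
  -- comparison constant for the bi-Lipschitz substitution
  set M : ℝ := (max 1 (L ^ 2)) ^ ((s - r) / 2) with hMdef
  have hmx : (0:ℝ) < max 1 (L ^ 2) := lt_of_lt_of_le zero_lt_one (le_max_left _ _)
  have hM1 : 1 ≤ M := Real.one_le_rpow (le_max_left _ _) (by linarith)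
  have hMpos : 0 < M := lt_of_lt_of_le zero_lt_one hM1
  have hgM : ∀ z w, g (z - χ w) ≤ M * g (ψ z - w) := by
    intro z w
    have hvu : ‖ψ z - w‖ ≤ L * ‖z - χ w‖ := by
      have h := hlip' (ψ z) w
      rwa [hψ z] at h
    have key : (1 + ‖ψ z - w‖ ^ 2) / max 1 (L ^ 2) ≤ 1 + ‖z - χ w‖ ^ 2 := by
      rw [div_le_iff₀ hmx]
      have h1 : ‖ψ z - w‖ ^ 2 ≤ L ^ 2 * ‖z - χ w‖ ^ 2 := by
        nlinarith [norm_nonneg (ψ z - w), norm_nonneg (z - χ w)]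
      have h2 : (1:ℝ) ≤ max 1 (L ^ 2) := le_max_left _ _
      have h3 : L ^ 2 ≤ max 1 (L ^ 2) := le_max_right _ _
      nlinarith [sq_nonneg ‖z - χ w‖]
    have h5 : g (z - χ w) ≤ ((1 + ‖ψ z - w‖ ^ 2) / max 1 (L ^ 2)) ^ ((r - s) / 2) :=
      Real.rpow_le_rpow_of_nonpos (by positivity) key (by linarith)
    refine h5.trans_eq ?_
    rw [Real.div_rpow (by positivity) hmx.le]
    rw [div_eq_mul_inv, ← Real.rpow_neg hmx.le]
    rw [show -((r - s) / 2) = (s - r) / 2 by ring]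
    simp only [hMdef, hgdef]
    ring
  -- Schur constants
  set A : ℝ≥0∞ := ENNReal.ofReal (c0 * M) * Ig with hAdef
  have hA0 : A ≠ 0 :=
    mul_ne_zero (ENNReal.ofReal_pos.mpr (by positivity)).ne' hIg0
  have hAtop : A ≠ ∞ := ENNReal.mul_ne_top ENNReal.ofReal_ne_top hIgtop.ne
  have hA2eq : ∀ w, ∫⁻ z, k w z = ENNReal.ofReal c0 * Ig := by
    intro w
    have h1 : ∀ z, k w z = ENNReal.ofReal c0 * ENNReal.ofReal (g (z - χ w)) := fun z => by
      simp only [hkdef]; exact ENNReal.ofReal_mul hc0.le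
    calc ∫⁻ z, k w z = ∫⁻ z, ENNReal.ofReal c0 * ENNReal.ofReal (g (z - χ w)) :=
          lintegral_congr h1
      _ = ENNReal.ofReal c0 * ∫⁻ z, ENNReal.ofReal (g (z - χ w)) :=
          lintegral_const_mul' _ _ ENNReal.ofReal_ne_top
      _ = ENNReal.ofReal c0 * Ig := by
          rw [hIgdef, lintegral_sub_right_eq_self
            (fun u : EuclideanSpace ℝ (Fin (2 * d)) => ENNReal.ofReal (g u)) (χ w)]
  have hA2 : ∀ w, ∫⁻ z, k w z ≤ A := by
    intro w
    rw [hA2eq w, hAdef]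
    exact mul_le_mul_left
      (ENNReal.ofReal_le_ofReal (le_mul_of_one_le_right hc0.le hM1)) Ig
  have hA1 : ∀ z, ∫⁻ w, k w z ≤ A := by
    intro z
    calc ∫⁻ w, k w z
        ≤ ∫⁻ w, ENNReal.ofReal (c0 * M) * ENNReal.ofReal (g (ψ z - w)) := by
          refine lintegral_mono fun w => ?_
          have h1 : c0 * g (z - χ w) ≤ (c0 * M) * g (ψ z - w) := by
            have := mul_le_mul_of_nonneg_left (hgM z w) hc0.le
            nlinarith [this]
          calc k w z ≤ ENNReal.ofReal ((c0 * M) * g (ψ z - w)) :=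
                ENNReal.ofReal_le_ofReal h1
            _ = ENNReal.ofReal (c0 * M) * ENNReal.ofReal (g (ψ z - w)) :=
                ENNReal.ofReal_mul (by positivity)
      _ = ENNReal.ofReal (c0 * M) * ∫⁻ w, ENNReal.ofReal (g (ψ z - w)) :=
          lintegral_const_mul' _ _ ENNReal.ofReal_ne_top
      _ = A := by
          rw [hAdef]
          congr 1
          have h2 : ∀ w : EuclideanSpace ℝ (Fin (2 * d)),
              ENNReal.ofReal (g (ψ z - w)) = ENNReal.ofReal (g (w - ψ z)) := fun w => by
            simp only [hgdef]; rw [norm_sub_rev]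
          rw [lintegral_congr h2, hIgdef, lintegral_sub_right_eq_self
            (fun u : EuclideanSpace ℝ (Fin (2 * d)) => ENNReal.ofReal (g u)) (ψ z)]
  -- final constant
  refine ⟨A.toReal + 1, by positivity, fun p hp F hF => ?_⟩
  have hAleC : A ≤ ENNReal.ofReal (A.toReal + 1) :=
    (ENNReal.ofReal_toReal hAtop).symm.le.trans (ENNReal.ofReal_le_ofReal (by linarith))
  set H : EuclideanSpace ℝ (Fin (2 * d)) → ℝ≥0∞ :=
    fun w => (‖(μ (χ w) : ℂ) * F w‖₊ : ℝ≥0∞) with hHdef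
  obtain ⟨H₀, hH₀m, hH₀le, hH₀core⟩ := exists_measurable_core (μ0 := volume) H
  have hHof : ∀ w, H w = ENNReal.ofReal (μ (χ w)) * (‖F w‖₊ : ℝ≥0∞) := by
    intro w
    simp only [hHdef]
    rw [nnnorm_mul, ENNReal.coe_mul, Complex.nnnorm_real,
      ← enorm_eq_nnnorm, Real.enorm_eq_ofReal (hμ_pos (χ w)).le]
  have hker : ∀ w z, ENNReal.ofReal (μ z) * (‖K w z‖₊ : ℝ≥0∞) ≤
      k w z * ENNReal.ofReal (μ (χ w)) := by
    intro w z
    have hμz : μ z ≤ Cμ * (1 + ‖z - χ w‖ ^ 2) ^ (r / 2) * μ (χ w) := by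
      have h := hmod (z - χ w) (χ w)
      rwa [sub_add_cancel] at h
    have hreal : μ z * ‖K w z‖ ≤ (c0 * g (z - χ w)) * μ (χ w) := by
      have h1 : (0:ℝ) < (1 + ‖z - χ w‖ ^ 2) ^ (r / 2) := Real.rpow_pos_of_pos (hbase _) _
      calc μ z * ‖K w z‖
          ≤ (Cμ * (1 + ‖z - χ w‖ ^ 2) ^ (r / 2) * μ (χ w)) *
            (C * (1 + ‖z - χ w‖ ^ 2) ^ (-s / 2)) := by
            refine mul_le_mul hμz (hK w z) (norm_nonneg _) ?_
            have := (hμ_pos (χ w)).le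
            positivity
        _ = (Cμ * C) * ((1 + ‖z - χ w‖ ^ 2) ^ (r / 2) *
            (1 + ‖z - χ w‖ ^ 2) ^ (-s / 2)) * μ (χ w) := by ring
        _ = (Cμ * C) * g (z - χ w) * μ (χ w) := by
            rw [← Real.rpow_add (hbase _), show r / 2 + -s / 2 = (r - s) / 2 by ring]
        _ ≤ (c0 * g (z - χ w)) * μ (χ w) := by
            have hg' := (hgpos (z - χ w)).le
            have hμ' := (hμ_pos (χ w)).le
            have hcc : Cμ * C ≤ c0 := by rw [hc0def]; nlinarith
            nlinarith [mul_le_mul_of_nonneg_right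
              (mul_le_mul_of_nonneg_right hcc hg') hμ']
    calc ENNReal.ofReal (μ z) * (‖K w z‖₊ : ℝ≥0∞)
        = ENNReal.ofReal (μ z * ‖K w z‖) := by
          rw [ENNReal.ofReal_mul (hμ_pos z).le, ofReal_norm_eq_enorm, enorm_eq_nnnorm]
      _ ≤ ENNReal.ofReal ((c0 * g (z - χ w)) * μ (χ w)) := ENNReal.ofReal_le_ofReal hreal
      _ = k w z * ENNReal.ofReal (μ (χ w)) := by
          rw [ENNReal.ofReal_mul (by positivity)]
  have hpt : ∀ z, (‖(μ z : ℂ) * ∫ w, K w z * F w‖₊ : ℝ≥0∞) ≤ ∫⁻ w, k w z * H w := by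
    intro z
    calc (‖(μ z : ℂ) * ∫ w, K w z * F w‖₊ : ℝ≥0∞)
        = ENNReal.ofReal (μ z) * (‖∫ w, K w z * F w‖₊ : ℝ≥0∞) := by
          rw [nnnorm_mul, ENNReal.coe_mul, Complex.nnnorm_real,
            ← enorm_eq_nnnorm, Real.enorm_eq_ofReal (hμ_pos z).le]
      _ ≤ ENNReal.ofReal (μ z) * ∫⁻ w, (‖K w z * F w‖₊ : ℝ≥0∞) :=
          mul_le_mul_right (enorm_integral_le_lintegral_enorm _) _
      _ = ∫⁻ w, ENNReal.ofReal (μ z) * (‖K w z * F w‖₊ : ℝ≥0∞) :=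
          (lintegral_const_mul' _ _ ENNReal.ofReal_ne_top).symm
      _ ≤ ∫⁻ w, k w z * H w := by
          refine lintegral_mono fun w => ?_
          rw [nnnorm_mul, ENNReal.coe_mul, ← mul_assoc, hHof w, ← mul_assoc]
          exact mul_le_mul_left (hker w z) _
  calc eLpNorm (fun z => (μ z : ℂ) * ∫ w, K w z * F w) p volume
      = Np volume p (fun z => (‖(μ z : ℂ) * ∫ w, K w z * F w‖₊ : ℝ≥0∞)) :=
        eLpNorm_eq_Np hp _
    _ ≤ Np volume p (fun z => ∫⁻ w, k w z * H w) := Np_mono hpt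
    _ ≤ Np volume p (fun z => ∫⁻ w, k w z * H₀ w) :=
        Np_mono fun z => lintegral_mul_le_core (hksec z) (fun w => hkfin w z) hH₀core
    _ ≤ A * Np volume p H₀ := schur_bound hkmeas hkfin hA0 hAtop hA1 hA2 hH₀m hp
    _ ≤ A * Np volume p H := mul_le_mul_right (Np_mono fun x => hH₀le x) _
    _ = A * eLpNorm (fun w => (μ (χ w) : ℂ) * F w) p volume := by
        rw [eLpNorm_eq_Np hp]
    _ ≤ ENNReal.ofReal (A.toReal + 1) *
        eLpNorm (fun w => (μ (χ w) : ℂ) * F w) p volume := mul_le_mul_left hAleC _
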